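/- Let k be a field of characteristic 0, and in k⟨⟨Y₁,Y₂,…⟩⟩ define Uᵢ to be the weight-i homogeneous component of log(1 + Y₁ + Y₂ + ⋯), where Yₙ has weight n (so U₁ = Y₁, U₂ = Y₂ − Y₁²/2, etc.). Under the identification Yₘ = −X₀^{m−1}X₁ inside k⟨⟨X₀,X₁⟩⟩, let ∂₀ be the derivation with ∂₀(X₀) = 1, ∂₀(X₁) = 0. Then ∂₀(Uₙ) = (n−1)U_{n−1} for all n ≥ 1 (with U₀ := 0). -/

import Mathlib

/- STATEMENT 6: with Uₙ the weight-n part of log(1 + Y₁ + Y₂ + ⋯) (explicitly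
Uₙ = Σ_{(n₁,…,n_r) composition of n} ((-1)^{r-1}/r) Y_{n₁}⋯Y_{n_r}), under the
identification Yₘ = -X₀^{m-1}X₁, and ∂₀ the derivation with ∂₀(X₀)=1, ∂₀(X₁)=0,
one has ∂₀(Uₙ) = (n-1)·U_{n-1} for all n ≥ 1 (with U₀ = 0). -/

noncomputable section

set_option linter.unusedSectionVars false
set_option maxHeartbeats 1000000

variable (k : Type) [Field k] [CharZero k]

abbrev U := FreeAlgebra k (Fin 2)

def X0 : U k := FreeAlgebra.ι k 0
def X1 : U k := FreeAlgebra.ι k 1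

/-- `Yₘ = -X₀^{m-1}X₁`. -/
def Ye (m : ℕ) : U k := -(X0 k ^ (m - 1) * X1 k)

lemma basis_apply (w : FreeMonoid (Fin 2)) :
    FreeAlgebra.basisFreeMonoid k (Fin 2) w =
      ((FreeMonoid.toList w).map (FreeAlgebra.ι k)).prod := by
  rw [FreeAlgebra.basisFreeMonoid, Module.Basis.map_apply, Finsupp.coe_basisSingleOne]
  show (FreeAlgebra.equivMonoidAlgebraFreeMonoid (R:=k) (X:=Fin 2)).symm
      (MonoidAlgebra.single w 1) = _
  rw [FreeAlgebra.equivMonoidAlgebraFreeMonoid]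
  simp [AlgEquiv.ofAlgHom, MonoidAlgebra.lift_single, FreeMonoid.lift_apply]

def phi (g : Fin 2 → U k) : U k →ₐ[k] TrivSqZeroExt (U k) (U k) :=
  FreeAlgebra.lift k fun i => TrivSqZeroExt.inl (FreeAlgebra.ι k i) + TrivSqZeroExt.inr (g i)

lemma phi_fst (g : Fin 2 → U k) (a : U k) : ((phi k g) a).fst = a := by
  have : (TrivSqZeroExt.fstHom k (U k) (U k)).comp (phi k g) = AlgHom.id k (U k) := by
    ext i
    simp [phi]
  exact DFunLike.congr_fun this a

def Dg (g : Fin 2 → U k) : U k →ₗ[k] U k :=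
  (TrivSqZeroExt.sndHom (U k) (U k)).restrictScalars k ∘ₗ (phi k g).toLinearMap

lemma Dg_mul (g : Fin 2 → U k) (a b : U k) :
    Dg k g (a * b) = Dg k g a * b + a * Dg k g b := by
  simp only [Dg, LinearMap.comp_apply, AlgHom.toLinearMap_apply, map_mul,
    LinearMap.coe_restrictScalars, TrivSqZeroExt.sndHom_apply, TrivSqZeroExt.snd_mul]
  rw [phi_fst, phi_fst]
  rw [smul_eq_mul, MulOpposite.smul_eq_mul_unop, MulOpposite.unop_op]
  exact add_comm _ _

lemma Dg_iota (g : Fin 2 → U k) (i : Fin 2) : Dg k g (FreeAlgebra.ι k i) = g i := by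
  simp [Dg, phi]

lemma Dg_one (g : Fin 2 → U k) : Dg k g 1 = 0 := by
  simp [Dg]

lemma D_list_prod (D : U k →ₗ[k] U k) (h1 : D 1 = 0)
    (hmul : ∀ a b, D (a * b) = D a * b + a * D b) (l : List (U k)) :
    D l.prod = ∑ i ∈ Finset.range l.length,
      (l.take i).prod * D (l.getD i 1) * (l.drop (i + 1)).prod := by
  induction l with
  | nil => simpa using h1
  | cons a t ih =>
    rw [List.prod_cons, hmul, ih, List.length_cons, Finset.sum_range_succ']
    simp only [List.take_succ_cons, List.getD_cons_succ, List.drop_succ_cons,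
      List.take_zero, List.prod_nil, List.getD_cons_zero, List.drop_one,
      List.prod_cons, one_mul, List.tail_cons, Finset.mul_sum]
    rw [add_comm]
    congr 1
    apply Finset.sum_congr rfl
    intro i _
    noncomm_ring

def derOn (g : Fin 2 → U k) : U k →ₗ[k] U k :=
  (FreeAlgebra.basisFreeMonoid k (Fin 2)).constr k fun w =>
    ∑ i ∈ Finset.range (FreeMonoid.toList w).length,
      (((FreeMonoid.toList w).take i).map (FreeAlgebra.ι k)).prod *
        g ((FreeMonoid.toList w).getD i 0) *
        (((FreeMonoid.toList w).drop (i + 1)).map (FreeAlgebra.ι k)).prod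

lemma derOn_eq_Dg (g : Fin 2 → U k) : derOn k g = Dg k g := by
  apply (FreeAlgebra.basisFreeMonoid k (Fin 2)).ext
  intro w
  rw [derOn, Module.Basis.constr_basis, basis_apply,
    D_list_prod k (Dg k g) (Dg_one k g) (Dg_mul k g)]
  rw [List.length_map]
  apply Finset.sum_congr rfl
  intro i hi
  rw [Finset.mem_range] at hi
  rw [← List.map_take, ← List.map_drop, List.getD_eq_getElem _ _ hi,
    List.getD_eq_getElem _ _ (by simpa using hi), List.getElem_map, Dg_iota]

/-- `∂₀`. -/
def d0 : U k →ₗ[k] U k := derOn k ![1, 0]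

lemma d0_one : d0 k 1 = 0 := by rw [d0, derOn_eq_Dg]; exact Dg_one k _

lemma d0_mul (a b : U k) : d0 k (a * b) = d0 k a * b + a * d0 k b := by
  rw [d0, derOn_eq_Dg]; exact Dg_mul k _ a b

lemma d0_X0 : d0 k (X0 k) = 1 := by
  rw [d0, derOn_eq_Dg, X0]; exact Dg_iota k _ 0

lemma d0_X1 : d0 k (X1 k) = 0 := by
  rw [d0, derOn_eq_Dg, X1]; exact Dg_iota k _ 1

lemma d0_X0pow (m : ℕ) : d0 k (X0 k ^ m) = (m : k) • X0 k ^ (m - 1) := by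
  induction m with
  | zero => simpa using d0_one k
  | succ m ih =>
    rcases Nat.eq_zero_or_pos m with rfl | hm
    · simpa using d0_X0 k
    · rw [pow_succ, d0_mul, ih, d0_X0, mul_one, smul_mul_assoc,
        ← pow_succ, Nat.sub_add_cancel hm]
      push_cast
      rw [add_smul, one_smul]
  
lemma d0_Ye (m : ℕ) : d0 k (Ye k m) = ((m - 1 : ℕ) : k) • Ye k (m - 1) := by
  rw [Ye, Ye, map_neg, d0_mul, d0_X1, mul_zero, add_zero, d0_X0pow]
  rw [smul_mul_assoc, ← smul_neg]

lemma sum_set_add (l : List ℕ) (i : ℕ) (hi : i < l.length) (v : ℕ) :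
    (l.set i v).sum + l.getD i 0 = l.sum + v := by
  rw [List.getD_eq_getElem _ _ hi, List.set_eq_take_cons_drop _ hi]
  conv_rhs => rw [← List.take_append_drop i l, List.drop_eq_getElem_cons hi]
  simp only [List.sum_append, List.sum_cons]
  omega

lemma getD_set_self (l : List ℕ) (i : ℕ) (hi : i < l.length) (v : ℕ) :
    (l.set i v).getD i 0 = v := by
  rw [List.getD_eq_getElem _ _ (by simpa using hi)]
  exact List.getElem_set_self _

lemma set_getD_self (l : List ℕ) (i : ℕ) (hi : i < l.length) :
    l.set i (l.getD i 0) = l := by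
  rw [List.getD_eq_getElem _ _ hi, List.set_eq_take_cons_drop _ hi,
    ← List.drop_eq_getElem_cons hi, List.take_append_drop]

lemma d0_prod (l : List ℕ) : d0 k ((l.map (Ye k)).prod) =
    ∑ i ∈ Finset.range l.length,
      ((l.getD i 0 - 1 : ℕ) : k) • ((l.set i (l.getD i 0 - 1)).map (Ye k)).prod := by
  rw [D_list_prod k (d0 k) (d0_one k) (d0_mul k), List.length_map]
  apply Finset.sum_congr rfl
  intro i hi
  rw [Finset.mem_range] at hi
  rw [List.getD_eq_getElem _ _ (by simpa using hi), List.getElem_map, d0_Ye,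
    List.getD_eq_getElem _ _ hi, List.set_eq_take_cons_drop _ hi,
    List.map_append, List.map_cons, List.prod_append, List.prod_cons,
    ← List.map_take, ← List.map_drop]
  rw [mul_smul_comm, smul_mul_assoc, mul_assoc]

lemma sum_getD_cast (l : List ℕ) :
    ∑ i ∈ Finset.range l.length, ((l.getD i 0 : ℕ) : k) = (l.sum : k) := by
  induction l with
  | nil => simp
  | cons a t ih =>
    rw [List.length_cons, Finset.sum_range_succ']
    simp only [List.getD_cons_succ, List.getD_cons_zero, List.sum_cons, ih]
    push_cast
    ring

def decC {n : ℕ} (c : Composition n) (i : ℕ) (hi : i < c.blocks.length)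
    (h2 : 2 ≤ c.blocks.getD i 0) : Composition (n - 1) where
  blocks := c.blocks.set i (c.blocks.getD i 0 - 1)
  blocks_pos := by
    intro x hx
    rcases List.mem_or_eq_of_mem_set hx with h | h
    · exact c.blocks_pos h
    · omega
  blocks_sum := by
    have h := sum_set_add c.blocks i hi (c.blocks.getD i 0 - 1)
    have hs := c.blocks_sum
    omega

def incC {n : ℕ} (hn : 1 ≤ n) (d : Composition (n - 1)) (i : ℕ)
    (hi : i < d.blocks.length) : Composition n where
  blocks := d.blocks.set i (d.blocks.getD i 0 + 1)
  blocks_pos := by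
    intro x hx
    rcases List.mem_or_eq_of_mem_set hx with h | h
    · exact d.blocks_pos h
    · omega
  blocks_sum := by
    have h := sum_set_add d.blocks i hi (d.blocks.getD i 0 + 1)
    have hs := d.blocks_sum
    omega

/-- `Uₙ`, the weight-`n` homogeneous component of `log(1 + Y₁ + Y₂ + ⋯)`:
`Uₙ = Σ ((-1)^{r-1}/r)·Y_{n₁}⋯Y_{n_r}` over compositions `(n₁,…,n_r)` of `n`
(for `n = 0` this sum is `0`, since `1/0 = 0` in Lean). -/
def Ulog (n : ℕ) : U k :=
  ∑ c : Composition n,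
    (((-1 : k) ^ (c.length - 1)) / (c.length : k)) • (c.blocks.map (Ye k)).prod

theorem d0_Ulog (n : ℕ) (hn : 1 ≤ n) :
    d0 k (Ulog k n) = ((n : k) - 1) • Ulog k (n - 1) := by
  classical
  -- LHS
  have lhs : d0 k (Ulog k n) =
      ∑ p ∈ (Finset.univ : Finset (Composition n)).sigma
          (fun c => Finset.range c.blocks.length),
        ((p.1.blocks.getD p.2 0 - 1 : ℕ) : k) •
          ((((-1 : k) ^ (p.1.length - 1)) / (p.1.length : k)) •
            ((p.1.blocks.set p.2 (p.1.blocks.getD p.2 0 - 1)).map (Ye k)).prod) := by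
    rw [Ulog, map_sum, Finset.sum_sigma]
    apply Finset.sum_congr rfl
    intro c _
    rw [map_smul, d0_prod, Finset.smul_sum]
    apply Finset.sum_congr rfl
    intro i _
    exact smul_comm _ _ _
  -- RHS
  have rhs : ((n : k) - 1) • Ulog k (n - 1) =
      ∑ q ∈ (Finset.univ : Finset (Composition (n - 1))).sigma
          (fun d => Finset.range d.blocks.length),
        ((q.1.blocks.getD q.2 0 : ℕ) : k) •
          ((((-1 : k) ^ (q.1.length - 1)) / (q.1.length : k)) •
            (q.1.blocks.map (Ye k)).prod) := by
    rw [Ulog, Finset.smul_sum, Finset.sum_sigma]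
    apply Finset.sum_congr rfl
    intro d _
    have hsum : ((n : k) - 1) = ∑ i ∈ Finset.range d.blocks.length,
        ((d.blocks.getD i 0 : ℕ) : k) := by
      rw [sum_getD_cast k, d.blocks_sum, Nat.cast_sub hn, Nat.cast_one]
    rw [hsum, Finset.sum_smul]
  rw [lhs, rhs]
  -- restrict LHS to blocks ≥ 2
  rw [← Finset.sum_filter_of_ne (p := fun p => 2 ≤ p.1.blocks.getD p.2 0)
    (by
      intro p hp hne
      by_contra h2
      apply hne
      rw [Finset.mem_sigma, Finset.mem_range] at hp
      have hpos : 0 < p.1.blocks.getD p.2 0 := by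
        have : p.1.blocks.getD p.2 0 ∈ p.1.blocks := by
          rw [List.getD_eq_getElem _ _ hp.2]
          exact List.getElem_mem _
        exact p.1.blocks_pos this
      have : p.1.blocks.getD p.2 0 = 1 := by omega
      rw [this]
      norm_num)]
  apply Finset.sum_bij'
    (i := fun p hp => (⟨decC p.1 p.2
        (by simp only [Finset.mem_filter, Finset.mem_sigma, Finset.mem_range, Finset.mem_univ, true_and] at hp; exact hp.1)
        (by simp only [Finset.mem_filter, Finset.mem_sigma, Finset.mem_range, Finset.mem_univ, true_and] at hp; exact hp.2), p.2⟩ :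
      Σ _ : Composition (n - 1), ℕ))
    (j := fun q hq => (⟨incC hn q.1 q.2
        (by simp only [Finset.mem_sigma, Finset.mem_range, Finset.mem_univ, true_and] at hq; exact hq), q.2⟩ :
      Σ _ : Composition n, ℕ))
  case hi =>
    rintro ⟨c, i⟩ hp
    simp only [Finset.mem_filter, Finset.mem_sigma, Finset.mem_range, Finset.mem_univ, true_and] at hp
    refine Finset.mem_sigma.mpr ⟨Finset.mem_univ _, Finset.mem_range.mpr ?_⟩
    show i < (c.blocks.set _ _).length
    rw [List.length_set]
    exact hp.1
  case hj =>
    rintro ⟨d, i⟩ hq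
    simp only [Finset.mem_sigma, Finset.mem_range, Finset.mem_univ, true_and] at hq
    have hi := hq
    have hpos : 0 < d.blocks.getD i 0 := by
      have : d.blocks.getD i 0 ∈ d.blocks := by
        rw [List.getD_eq_getElem _ _ hi]; exact List.getElem_mem _
      exact d.blocks_pos this
    refine Finset.mem_filter.mpr ⟨Finset.mem_sigma.mpr ⟨Finset.mem_univ _, Finset.mem_range.mpr ?_⟩, ?_⟩
    · show i < (d.blocks.set _ _).length
      rw [List.length_set]; exact hi
    · show 2 ≤ (d.blocks.set i (d.blocks.getD i 0 + 1)).getD i 0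
      rw [getD_set_self _ _ hi]
      omega
  case left_neg =>
    rintro ⟨c, i⟩ hp
    simp only [Finset.mem_filter, Finset.mem_sigma, Finset.mem_range, Finset.mem_univ, true_and] at hp
    have hi := hp.1
    have h2 := hp.2
    refine Sigma.ext ?_ (heq_of_eq rfl)
    apply Composition.ext
    show ((c.blocks.set i (c.blocks.getD i 0 - 1)).set i
        ((c.blocks.set i (c.blocks.getD i 0 - 1)).getD i 0 + 1)) = c.blocks
    rw [getD_set_self _ _ hi, List.set_set, Nat.sub_add_cancel (by omega),
      set_getD_self _ _ hi]
  case right_neg =>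
    rintro ⟨d, i⟩ hq
    simp only [Finset.mem_sigma, Finset.mem_range, Finset.mem_univ, true_and] at hq
    have hi := hq
    refine Sigma.ext ?_ (heq_of_eq rfl)
    apply Composition.ext
    show ((d.blocks.set i (d.blocks.getD i 0 + 1)).set i
        ((d.blocks.set i (d.blocks.getD i 0 + 1)).getD i 0 - 1)) = d.blocks
    rw [getD_set_self _ _ hi, List.set_set, Nat.add_sub_cancel, set_getD_self _ _ hi]
  case h =>
    rintro ⟨c, i⟩ hp
    simp only [Finset.mem_filter, Finset.mem_sigma, Finset.mem_range, Finset.mem_univ, true_and] at hp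
    have hi := hp.1
    have hlen : i < (c.blocks.set i (c.blocks.getD i 0 - 1)).length := by
      rw [List.length_set]; exact hi
    simp only [decC, Composition.length, List.length_set, getD_set_self _ _ hi]

end
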